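/- Let {π^i_j : B_i → B_{ij}} be a distributive family of surjective algebra homomorphisms indexed by a finite set J. If for all distinct i,j,k ∈ J and all b_i ∈ B_i, b_j ∈ B_j with π^i_j(b_i) = π^j_i(b_j) there exists b_k ∈ B_k with π^i_k(b_i) = π^k_i(b_k) and π^j_k(b_j) = π^k_j(b_k), then π^i_k(ker π^i_j) = π^k_i(ker π^k_j) for all distinct i,j,k. -/

import Mathlib

open Function

/-- A set of ideals *generates a distributive lattice* iff it is contained in a
distributive sublattice of the lattice of ideals. -/
def GeneratesDistribLattice {A : Type*} [CommRing A] (s : Set (Ideal A)) : Prop :=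
  ∃ L : Sublattice (Ideal A), (∀ I ∈ s, I ∈ L) ∧
    ∀ x ∈ L, ∀ y ∈ L, ∀ z ∈ L, x ⊓ (y ⊔ z) = (x ⊓ y) ⊔ (x ⊓ z)

variable {J : Type*}

/-- Compatibility of `b i` and `b j`: `π^i_j (b i) = π^j_i (b j)`, where the
identification `B_{ij} = B_{ji}` is witnessed by the ring isomorphisms `e`. -/
def Compat (B : J → Type*) [∀ i, CommRing (B i)] (C : J → J → Type*)
    [∀ i j, CommRing (C i j)] (π : ∀ i j, B i →+* C i j)
    (e : ∀ i j, C i j ≃+* C j i) (i j : J) (bi : B i) (bj : B j) : Prop :=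
  π i j bi = e j i (π j i bj)

/-- A *distributive family*: all the homomorphisms `π^i_j` are surjective and, for each
`i`, the kernels `ker π^i_j` generate a distributive lattice of ideals of `B i`. -/
def DistribFamily (B : J → Type*) [∀ i, CommRing (B i)] (C : J → J → Type*)
    [∀ i j, CommRing (C i j)] (π : ∀ i j, B i →+* C i j) : Prop :=
  (∀ i j, i ≠ j → Surjective (π i j)) ∧
  ∀ i : J, GeneratesDistribLattice {I : Ideal (B i) | ∃ j, j ≠ i ∧ I = RingHom.ker (π i j)}

/-- The first cocycle condition: `π^i_j (ker π^i_k) = π^j_i (ker π^j_k)` for all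
distinct `i, j, k` (the right-hand side is transported to `C i j` by `e`). -/
def Cocycle1 (B : J → Type*) [∀ i, CommRing (B i)] (C : J → J → Type*)
    [∀ i j, CommRing (C i j)] (π : ∀ i j, B i →+* C i j)
    (e : ∀ i j, C i j ≃+* C j i) : Prop :=
  ∀ i j k : J, i ≠ j → i ≠ k → j ≠ k →
    Ideal.map (π i j) (RingHom.ker (π i k)) =
      Ideal.map ((e j i).toRingHom.comp (π j i)) (RingHom.ker (π j k))

/-- The second cocycle condition `φ^{ik}_j = φ^{ij}_k ∘ φ^{jk}_i`, expressed elementwise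
via the characterization
`φ^{ij}_k ([b_j]^j_{ik}) = [b_i]^i_{jk} ↔ π^i_j(b_i) - π^j_i(b_j) ∈ π^i_j(ker π^i_k)`. -/
def Cocycle2 (B : J → Type*) [∀ i, CommRing (B i)] (C : J → J → Type*)
    [∀ i j, CommRing (C i j)] (π : ∀ i j, B i →+* C i j)
    (e : ∀ i j, C i j ≃+* C j i) : Prop :=
  ∀ i j k : J, i ≠ j → i ≠ k → j ≠ k → ∀ (bi : B i) (bj : B j) (bk : B k),
    π j k bj - e k j (π k j bk) ∈ Ideal.map (π j k) (RingHom.ker (π j i)) →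
    π i j bi - e j i (π j i bj) ∈ Ideal.map (π i j) (RingHom.ker (π i k)) →
    π i k bi - e k i (π k i bk) ∈ Ideal.map (π i k) (RingHom.ker (π i j))

/-- The cocycle condition of Calow–Matthes. -/
def CocycleCondition (B : J → Type*) [∀ i, CommRing (B i)] (C : J → J → Type*)
    [∀ i j, CommRing (C i j)] (π : ∀ i j, B i →+* C i j)
    (e : ∀ i j, C i j ≃+* C j i) : Prop :=
  Cocycle1 B C π e ∧ Cocycle2 B C π e

/-- The two-element extension property: every compatible pair `(b_i, b_j)` extends by
some `b_k` compatible with both. -/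
def ExtendsPairs (B : J → Type*) [∀ i, CommRing (B i)] (C : J → J → Type*)
    [∀ i j, CommRing (C i j)] (π : ∀ i j, B i →+* C i j)
    (e : ∀ i j, C i j ≃+* C j i) : Prop :=
  ∀ i j k : J, i ≠ j → i ≠ k → j ≠ k → ∀ (bi : B i) (bj : B j),
    Compat B C π e i j bi bj →
    ∃ bk : B k, Compat B C π e i k bi bk ∧ Compat B C π e j k bj bk

lemma stmt1_aux (B : J → Type*) [∀ i, CommRing (B i)]
    (C : J → J → Type*) [∀ i j, CommRing (C i j)]
    (π : ∀ i j, B i →+* C i j) (e : ∀ i j, C i j ≃+* C j i)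
    (hext : ExtendsPairs B C π e) :
    ∀ i j k : J, i ≠ j → i ≠ k → j ≠ k →
      Ideal.map (π i k) (RingHom.ker (π i j)) ≤
        Ideal.map ((e k i).toRingHom.comp (π k i)) (RingHom.ker (π k j)) := by
  intro i j k hij hik hjk
  rw [Ideal.map_le_iff_le_comap]
  intro bi hbi
  obtain ⟨bk, h1, h2⟩ := hext i j k hij hik hjk bi 0
    (by simp [Compat, RingHom.mem_ker.mp hbi])
  have hker : bk ∈ RingHom.ker (π k j) := by
    simp only [Compat, map_zero] at h2
    exact RingHom.mem_ker.mpr ((e k j).injective (by simpa using h2.symm))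
  have : π i k bi = ((e k i).toRingHom.comp (π k i)) bk := h1
  rw [Ideal.mem_comap, this]
  exact Ideal.mem_map_of_mem _ hker

/-- for a distributive family, the two-element extension property implies
the first cocycle condition `π^i_k (ker π^i_j) = π^k_i (ker π^k_j)`. -/
theorem stmt1 [Fintype J] (B : J → Type*) [∀ i, CommRing (B i)]
    (C : J → J → Type*) [∀ i j, CommRing (C i j)]
    (π : ∀ i j, B i →+* C i j) (e : ∀ i j, C i j ≃+* C j i)
    (he : ∀ i j, e j i = (e i j).symm)
    (hdist : DistribFamily B C π)
    (hext : ExtendsPairs B C π e) :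
    ∀ i j k : J, i ≠ j → i ≠ k → j ≠ k →
      Ideal.map (π i k) (RingHom.ker (π i j)) =
        Ideal.map ((e k i).toRingHom.comp (π k i)) (RingHom.ker (π k j)) := by
  intro i j k hij hik hjk
  refine le_antisymm (stmt1_aux B C π e hext i j k hij hik hjk) ?_
  have h := stmt1_aux B C π e hext k j i (Ne.symm hjk) (Ne.symm hik) (Ne.symm hij)
  have h2 := Ideal.map_mono (f := (e k i).toRingHom) h
  rw [Ideal.map_map, Ideal.map_map] at h2
  have hcomp : ((e k i).toRingHom).comp ((e i k).toRingHom.comp (π i k)) = π i k := by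
    ext x
    simp [he i k]
  rwa [hcomp] at h2
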